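/- If for every source-sink pair (s,t) ∈ M and every set X of at most k−1 terminals with s,t ∉ X there is a subset Tᵢ in the family with s,t ∈ Tᵢ and X ∩ Tᵢ = ∅ (good family), and each Eᵢ is a feasible solution to the element-connectivity instance on terminals Tᵢ (so s and t are r(s,t)-element connected in (V, Eᵢ) whenever s,t ∈ Tᵢ), then in the graph (V, ⋃ᵢ Eᵢ), for every pair (s,t) ∈ M and every vertex set X ⊆ V \ {s,t} with |X| ≤ r(s,t) − 1, removing X does not disconnect s from t; hence every pair (s,t) ∈ M is r(s,t)-vertex-connected. -/

import Mathlib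

open Finset

/-- The graph `H` with the edges in `F` and all edges incident to vertices of `Y`
deleted. -/
def delGraph {V : Type*} (H : SimpleGraph V) (F : Set (Sym2 V)) (Y : Set V) :
    SimpleGraph V where
  Adj a b := H.Adj a b ∧ a ∉ Y ∧ b ∉ Y ∧ s(a, b) ∉ F
  symm := by
    refine ⟨?_⟩
    rintro a b ⟨h1, h2, h3, h4⟩
    exact ⟨h1.symm, h3, h2, by rwa [Sym2.eq_swap]⟩
  loopless := by
    refine ⟨?_⟩
    rintro a ⟨h, -⟩
    exact H.loopless.irrefl a h

/-- `s` and `t` are `r`-element connected in `H` with respect to terminal set `T`: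
removing any fewer than `r` elements (edges, or vertices outside `T ∪ {s,t}`)
leaves `s` and `t` connected. -/
def ElemConn {V : Type*} (H : SimpleGraph V) (T : Set V) (r : ℕ) (s t : V) : Prop :=
  ∀ (F : Finset (Sym2 V)) (Y : Finset V),
    (↑Y : Set V) ⊆ (T ∪ {s, t})ᶜ → F.card + Y.card < r →
      (delGraph H ↑F ↑Y).Reachable s t


lemma delGraph_mono {V : Type*} {H H' : SimpleGraph V} (h : H ≤ H')
    (F : Set (Sym2 V)) (Y : Set V) : delGraph H F Y ≤ delGraph H' F Y := by
  rintro a b ⟨h1, h2, h3, h4⟩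
  exact ⟨h h1, h2, h3, h4⟩

/-- Good family + feasible element-connectivity solutions imply that in the union
graph, no vertex set of size ≤ r(s,t) − 1 separates any source-sink pair. -/
theorem good_family_gives_vertex_connectivity
    {V : Type*} [DecidableEq V] (T : Finset V) (M : Set (V × V))
    (r : V → V → ℕ) (k m : ℕ)
    (Tfam : Fin m → Set V) (Gsol : Fin m → SimpleGraph V)
    (hTfam : ∀ i, Tfam i ⊆ ↑T)
    (hM : ∀ s t : V, (s, t) ∈ M → s ∈ T ∧ t ∈ T)
    (hr : ∀ s t : V, (s, t) ∈ M → 1 ≤ r s t ∧ r s t ≤ k)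
    (hgood : ∀ s t : V, (s, t) ∈ M → ∀ X : Finset V, ↑X ⊆ (↑T : Set V) →
      X.card ≤ k - 1 → s ∉ X → t ∉ X →
      ∃ i, s ∈ Tfam i ∧ t ∈ Tfam i ∧ ∀ x ∈ X, x ∉ Tfam i)
    (hfeas : ∀ i, ∀ s t : V, s ∈ Tfam i → t ∈ Tfam i →
      ElemConn (Gsol i) (Tfam i) (r s t) s t) :
    ∀ s t : V, (s, t) ∈ M → ∀ X : Finset V, s ∉ X → t ∉ X →
      X.card ≤ r s t - 1 →
      (delGraph (⨆ i, Gsol i) ∅ ↑X).Reachable s t := by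
  intro s t hst X hsX htX hcard
  obtain ⟨hr1, hrk⟩ := hr s t hst
  classical
  set X' := X.filter (· ∈ T) with hX'
  have hX'sub : ↑X' ⊆ (↑T : Set V) := by
    intro x hx
    simp only [hX', coe_filter, Set.mem_setOf_eq] at hx
    exact hx.2
  have hX'card : X'.card ≤ k - 1 := by
    calc X'.card ≤ X.card := card_filter_le _ _
    _ ≤ r s t - 1 := hcard
    _ ≤ k - 1 := Nat.sub_le_sub_right hrk 1
  have hsX' : s ∉ X' := fun h => hsX (mem_filter.1 h).1
  have htX' : t ∉ X' := fun h => htX (mem_filter.1 h).1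
  obtain ⟨i, hsi, hti, hdisj⟩ := hgood s t hst X' hX'sub hX'card hsX' htX'
  have hYsub : (↑X : Set V) ⊆ (Tfam i ∪ {s, t})ᶜ := by
    intro x hx
    simp only [Set.mem_compl_iff, Set.mem_union, Set.mem_insert_iff,
      Set.mem_singleton_iff, not_or]
    refine ⟨?_, ?_, ?_⟩
    · intro hxT
      have hxTerm : x ∈ T := hTfam i hxT
      exact hdisj x (mem_filter.2 ⟨hx, hxTerm⟩) hxT
    · rintro rfl; exact hsX hx
    · rintro rfl; exact htX hx
  have hlt : (∅ : Finset (Sym2 V)).card + X.card < r s t := by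
    simp only [card_empty, zero_add]
    omega
  have hreach := hfeas i s t hsi hti ∅ X hYsub hlt
  have hmono : delGraph (Gsol i) ↑(∅ : Finset (Sym2 V)) ↑X ≤
      delGraph (⨆ j, Gsol j) (∅ : Set (Sym2 V)) ↑X := by
    have := delGraph_mono (le_iSup Gsol i) (↑(∅ : Finset (Sym2 V))) (↑X : Set V)
    simpa using this
  exact hreach.mono hmono
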